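/- arXiv:1311.0614 — 3 statements merged into one kernel-verified Lean document; each statement's English description precedes it below -/
import Mathlib

section
/- For any continuous map T of a compact metric space X, the set W(T) of weakly almost periodic points has full measure for every T-invariant Borel probability measure. -/
open MeasureTheory Filter Set Metric Topology NNReal ENNReal

noncomputable section

variable {X : Type*} [MetricSpace X] [CompactSpace X] [MeasurableSpace X] [BorelSpace X]

/-- Bowen dynamical ball of order `m` and radius `ε`. -/
def bowenBall (T : X → X) (x : X) (m : ℕ) (ε : ℝ) : Set X :=
  {y | ∀ j < m, dist (T^[j] x) (T^[j] y) ≤ ε}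

/-- Weight `2 ^ (-t·m)` of an entry of a Bowen cover (`none` entries weigh `0`). -/
def bowenWeight (t : ℝ≥0) (c : Option (X × ℕ)) : ℝ≥0∞ :=
  c.elim 0 fun p => (2 : ℝ≥0∞) ^ (-((t : ℝ) * (p.2 : ℝ)))

/-- A finite or countable cover of `E` by Bowen balls of order at least `n`. -/
def IsBowenCover (T : X → X) (E : Set X) (n : ℕ) (ε : ℝ)
    (c : ℕ → Option (X × ℕ)) : Prop :=
  (∀ i p, c i = some p → n ≤ p.2) ∧
    E ⊆ ⋃ i, (c i).elim ∅ fun p => bowenBall T p.1 p.2 ε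

/-- The quantity `C(E; t, n, ε)` of Bowen. -/
def bowenC (T : X → X) (E : Set X) (t : ℝ≥0) (n : ℕ) (ε : ℝ) : ℝ≥0∞ :=
  ⨅ (c : ℕ → Option (X × ℕ)) (_ : IsBowenCover T E n ε c), ∑' i, bowenWeight t (c i)

/-- Bowen entropy of `E` at scale `ε`: the critical exponent `t` at which
`C(E; t, ε) = lim_n C(E; t, n, ε)` vanishes. -/
def bowenEntropyOf (T : X → X) (E : Set X) (ε : ℝ) : ℝ≥0∞ :=
  ⨅ t : {t : ℝ≥0 // ⨆ n, bowenC T E t n ε = 0}, (t.1 : ℝ≥0∞)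

/-- Bowen (dimension-like) topological entropy of an arbitrary subset `E ⊆ X`.
For `E = univ` this is the topological entropy of `T`. -/
def bowenEntropy (T : X → X) (E : Set X) : ℝ≥0∞ :=
  ⨆ (ε : ℝ) (_ : 0 < ε), bowenEntropyOf T E ε

/-- Birkhoff average `(1/n) ∑_{i<n} φ(T^i x)`. -/
def birkhoffAvg (T : X → X) (φ : X → ℝ) (x : X) (n : ℕ) : ℝ :=
  (∑ i ∈ Finset.range n, φ (T^[i] x)) / n

/-- `x` is a generic point for `μ`: the empirical measures `Υ_n(x)` converge to `μ`
in the weak* topology, i.e. Birkhoff averages of every continuous function converge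
to the corresponding integral. -/
def genericFor (T : X → X) (x : X) (μ : Measure X) : Prop :=
  ∀ φ : X → ℝ, Continuous φ →
    Tendsto (fun n => birkhoffAvg T φ x n) atTop (𝓝 (∫ y, φ y ∂μ))

/-- `ρ` is a weak* limit point of the sequence of empirical measures of `x`,
i.e. `ρ ∈ M_x(T)`. -/
def limitMeasure (T : X → X) (x : X) (ρ : Measure X) : Prop :=
  ∃ n : ℕ → ℕ, StrictMono n ∧ ∀ φ : X → ℝ, Continuous φ →
    Tendsto (fun k => birkhoffAvg T φ x (n k)) atTop (𝓝 (∫ y, φ y ∂ρ))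

/-- The (topological) support of a measure on a metric space. -/
def measSupport (μ : Measure X) : Set X := {x | ∀ ε > 0, 0 < μ (Metric.ball x ε)}

/-- Lower visit frequency of the orbit of `x` in the set `E`. -/
def visitLiminf (T : X → X) (x : X) (E : Set X) : ℝ :=
  Filter.atTop.liminf fun n =>
    (∑ i ∈ Finset.range n, E.indicator (fun _ => (1 : ℝ)) (T^[i] x)) / n

/-- Upper visit frequency of the orbit of `x` in the set `E`. -/
def visitLimsup (T : X → X) (x : X) (E : Set X) : ℝ :=
  Filter.atTop.limsup fun n =>
    (∑ i ∈ Finset.range n, E.indicator (fun _ => (1 : ℝ)) (T^[i] x)) / n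

/-- Weakly almost periodic points `W(T)`. -/
def weaklyAlmostPeriodicPts (T : X → X) : Set X :=
  {x | ∀ ε > 0, 0 < visitLiminf T x (Metric.ball x ε)}

/-- Quasi-weakly almost periodic points `QW(T)`. -/
def quasiWeaklyAlmostPeriodicPts (T : X → X) : Set X :=
  {x | ∀ ε > 0, 0 < visitLimsup T x (Metric.ball x ε)}

/-- Recurrent points: `x ∈ ω_T(x)`. -/
def recurrentPts (T : X → X) : Set X :=
  {x | ∀ ε > 0, ∃ n ≥ 1, dist (T^[n] x) x < ε}

/-- Quasiregular points `QR(T)`: points generic for some invariant Borel probability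
measure. -/
def quasiRegularPts (T : X → X) : Set X :=
  {x | ∃ μ : Measure X, IsProbabilityMeasure μ ∧ μ.map T = μ ∧ genericFor T x μ}

/-- A (compact) minimal set: nonempty, closed, invariant, and every orbit in it is
dense in it. -/
def IsMinimalSet (T : X → X) (K : Set X) : Prop :=
  K.Nonempty ∧ IsClosed K ∧ Set.MapsTo T K K ∧
    ∀ y ∈ K, closure (Set.range fun n => T^[n] y) = K

/-- Almost periodic points `A(T)`: points lying in a compact minimal invariant set. -/
def almostPeriodicPts (T : X → X) : Set X :=
  {x | ∃ K, IsMinimalSet T K ∧ x ∈ K}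

/-- Entropy `H(μ, ⋁_{k<n} T^{-k}ξ)` of the `n`-th dynamical refinement of the finite
partition coded by `p`. -/
def partitionDynEntropy (T : X → X) (μ : Measure X) (p : X → ℕ) (n : ℕ) : ℝ≥0∞ :=
  ∑' f : Fin n → ℕ,
    ENNReal.ofReal (Real.negMulLog ((μ {x | ∀ k : Fin n, p (T^[(k : ℕ)] x) = f k}).toReal))

/-- Kolmogorov–Sinai (metric) entropy of `μ`: supremum over finite measurable
partitions of the exponential growth rate of the refined partition entropies. -/
def metricEntropy (T : X → X) (μ : Measure X) : ℝ≥0∞ :=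
  ⨆ p : {p : X → ℕ // Measurable p ∧ (Set.range p).Finite},
    Filter.atTop.limsup fun n => partitionDynEntropy T μ p.1 n / (n : ℝ≥0∞)

/-- The periodic measure: uniform measure on the (periodic) orbit segment of length
`n` of `x`. -/
def periodicOrbitMeasure (T : X → X) (x : X) (n : ℕ) : Measure X :=
  (n : ℝ≥0∞)⁻¹ • ∑ i ∈ Finset.range n, Measure.dirac (T^[i] x)

/-- Regular points `R(T) = ⋃_{μ ergodic} (G_μ ∩ supp μ)`. -/
def regularPts (T : X → X) : Set X :=
  {x | ∃ μ : Measure X, IsProbabilityMeasure μ ∧ Ergodic T μ ∧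
    genericFor T x μ ∧ x ∈ measSupport μ}

/-- The set of integrals `∫ φ dμ` over all invariant Borel probability measures;
its infimum and supremum are the endpoints of the interval `L_φ`. -/
def invIntegralSet (T : X → X) (φ : X → ℝ) : Set ℝ :=
  {r | ∃ μ : Measure X, IsProbabilityMeasure μ ∧ μ.map T = μ ∧ (∫ y, φ y ∂μ) = r}

/-- The entropy spectrum `Ψ(a) = sup {h_ρ(T) : ρ invariant, ∫φ dρ = a}`. -/
def entSpectrum (T : X → X) (φ : X → ℝ) (a : ℝ) : ℝ≥0∞ :=
  ⨆ (ρ : Measure X) (_ : IsProbabilityMeasure ρ ∧ ρ.map T = ρ ∧ (∫ y, φ y ∂ρ) = a),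
    metricEntropy T ρ

namespace WAPaux

/-- Running maximum of the partial Birkhoff sums. -/
def garsiaMax {Y : Type*} (S : ℕ → Y → ℝ) : ℕ → Y → ℝ
  | 0 => fun _ => 0
  | (N+1) => fun x => max (garsiaMax S N x) (S (N+1) x)

omit [MetricSpace X] [CompactSpace X] [BorelSpace X] in
lemma integrable_of_bdd {μ : Measure X} [IsFiniteMeasure μ] {g : X → ℝ} {c : ℝ}
    (hg : Measurable g) (hb : ∀ x, |g x| ≤ c) : Integrable g μ :=
  ⟨hg.aestronglyMeasurable, HasFiniteIntegral.of_bounded (C := c) (ae_of_all _ hb)⟩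

omit [MetricSpace X] [CompactSpace X] [BorelSpace X] in
/-- Garsia's maximal ergodic inequality. -/
lemma garsia (T : X → X) (hT : Measurable T) (μ : Measure X) [IsProbabilityMeasure μ]
    (hinv : μ.map T = μ) (f : X → ℝ) (hf : Measurable f) (C : ℝ) (hb : ∀ x, |f x| ≤ C) :
    0 ≤ ∫ x in {x | ∃ n, 1 ≤ n ∧ 0 < ∑ i ∈ Finset.range n, f (T^[i] x)}, f x ∂μ := by
  set S : ℕ → X → ℝ := fun n x => ∑ i ∈ Finset.range n, f (T^[i] x) with hS
  have hSmeas : ∀ n, Measurable (S n) := fun n =>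
    Finset.measurable_sum _ (fun i _ => hf.comp (hT.iterate i))
  have hrec : ∀ n x, S (n+1) x = f x + S n (T x) := by
    intro n x
    simp only [hS, Finset.sum_range_succ' (fun i => f (T^[i] x)) n,
      Function.iterate_succ_apply, Function.iterate_zero_apply]
    ring
  set F : ℕ → X → ℝ := garsiaMax S with hF
  have hF0 : ∀ N x, 0 ≤ F N x := by
    intro N x; induction N with
    | zero => exact le_refl 0
    | succ N ih => exact le_max_of_le_left ih
  have hFS : ∀ N k x, k ≤ N → S k x ≤ F N x := by
    intro N; induction N with
    | zero => intro k x hk; interval_cases k; simp [hS, hF, garsiaMax]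
    | succ N ih =>
      intro k x hk
      rcases Nat.lt_or_ge k (N+1) with h | h
      · exact (ih k x (Nat.lt_succ_iff.mp h)).trans (le_max_left _ _)
      · have : k = N+1 := le_antisymm hk h
        subst this; exact le_max_right _ _
  have hFmeas : ∀ N, Measurable (F N) := by
    intro N; induction N with
    | zero => exact measurable_const
    | succ N ih => exact ih.max (hSmeas (N+1))
  have hD : ∃ D, 0 ≤ D ∧ ∀ N x, |F N x| ≤ D * N := by
    refine ⟨max C 0, le_max_right _ _, ?_⟩
    intro N x
    rw [abs_of_nonneg (hF0 N x)]
    induction N with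
    | zero => simp [hF, garsiaMax]
    | succ N ih =>
      have hSb : S (N+1) x ≤ max C 0 * (N+1) := by
        calc S (N+1) x ≤ |S (N+1) x| := le_abs_self _
        _ ≤ ∑ i ∈ Finset.range (N+1), |f (T^[i] x)| := Finset.abs_sum_le_sum_abs _ _
        _ ≤ ∑ _i ∈ Finset.range (N+1), max C 0 :=
            Finset.sum_le_sum fun i _ => (hb _).trans (le_max_left _ _)
        _ = max C 0 * (N+1) := by simp [mul_comm]
      have hF1 : F N x ≤ max C 0 * (N+1) := by
        refine ih.trans ?_
        push_cast
        nlinarith [le_max_right C 0]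
      simpa [hF, garsiaMax, max_le_iff] using ⟨hF1, by push_cast at hSb ⊢; linarith⟩
  obtain ⟨D, hD0, hDb⟩ := hD
  have hattain : ∀ N x, 0 < F N x → ∃ k, 1 ≤ k ∧ k ≤ N ∧ F N x ≤ S k x := by
    intro N; induction N with
    | zero => intro x hx; simp [hF, garsiaMax] at hx
    | succ N ih =>
      intro x hx
      rcases le_total (S (N+1) x) (F N x) with h | h
      · have hmax : F (N+1) x = F N x := max_eq_left h
        rw [hmax] at hx ⊢
        obtain ⟨k, h1, h2, h3⟩ := ih x hx
        exact ⟨k, h1, h2.trans (Nat.le_succ N), h3⟩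
      · exact ⟨N+1, Nat.succ_le_succ (Nat.zero_le N), le_refl _,
          le_of_eq (max_eq_right h)⟩
  have hkey : ∀ N x, 0 < F N x → F N x ≤ f x + F N (T x) := by
    intro N x hx
    obtain ⟨k, h1, h2, h3⟩ := hattain N x hx
    obtain ⟨m, rfl⟩ : ∃ m, k = m + 1 := ⟨k - 1, (Nat.succ_pred_eq_of_pos h1).symm⟩
    calc F N x ≤ S (m+1) x := h3
    _ = f x + S m (T x) := hrec m x
    _ ≤ f x + F N (T x) := by
        have := hFS N m (T x) (Nat.le_of_succ_le h2)
        linarith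
  set A : ℕ → Set X := fun N => {x | 0 < F N x} with hA
  have hAmeas : ∀ N, MeasurableSet (A N) := fun N =>
    measurableSet_lt measurable_const (hFmeas N)
  have hAmono : Monotone A := by
    intro M N hMN x hx
    have hmono : ∀ K L, K ≤ L → ∀ y, F K y ≤ F L y := by
      intro K L hKL
      induction L with
      | zero => intro y; rw [Nat.le_zero.mp hKL]
      | succ L ihL =>
        intro y
        rcases Nat.lt_or_ge K (L+1) with h | h
        · exact (ihL (Nat.lt_succ_iff.mp h) y).trans (le_max_left _ _)
        · have : K = L+1 := le_antisymm hKL h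
          subst this; exact le_refl _
    exact lt_of_lt_of_le hx (hmono M N hMN x)
  have hAunion : (⋃ N, A N) = {x | ∃ n, 1 ≤ n ∧ 0 < S n x} := by
    ext x
    simp only [mem_iUnion, hA, mem_setOf_eq]
    constructor
    · rintro ⟨N, hN⟩
      obtain ⟨k, h1, _, h3⟩ := hattain N x hN
      exact ⟨k, h1, lt_of_lt_of_le hN h3⟩
    · rintro ⟨n, h1, h2⟩
      exact ⟨n, lt_of_lt_of_le h2 (hFS n n x (le_refl n))⟩
  have hfint : Integrable f μ := integrable_of_bdd hf hb
  have hFint : ∀ N, Integrable (F N) μ := fun N => integrable_of_bdd (hFmeas N) (hDb N)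
  have hFTint : ∀ N, Integrable (fun x => F N (T x)) μ := fun N =>
    integrable_of_bdd ((hFmeas N).comp hT) (fun x => hDb N (T x))
  have step : ∀ N, 0 ≤ ∫ x in A N, f x ∂μ := by
    intro N
    have h1 : ∫ x in A N, F N x ∂μ ≤ ∫ x in A N, (f x + F N (T x)) ∂μ :=
      setIntegral_mono_on (hFint N).integrableOn ((hfint.add (hFTint N)).integrableOn)
        (hAmeas N) (fun x hx => hkey N x hx)
    have h2 : ∫ x in A N, (f x + F N (T x)) ∂μ
        = ∫ x in A N, f x ∂μ + ∫ x in A N, F N (T x) ∂μ :=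
      integral_add hfint.integrableOn (hFTint N).integrableOn
    have h3 : ∫ x in A N, F N (T x) ∂μ ≤ ∫ x, F N (T x) ∂μ :=
      setIntegral_le_integral (hFTint N) (ae_of_all _ fun x => hF0 N (T x))
    have h4 : ∫ x, F N (T x) ∂μ = ∫ x, F N x ∂μ := by
      conv_rhs => rw [← hinv]
      rw [integral_map hT.aemeasurable]
      · rw [hinv]; exact (hFmeas N).aestronglyMeasurable
    have h5 : ∫ x, F N x ∂μ = ∫ x in A N, F N x ∂μ := by
      rw [← integral_indicator (hAmeas N)]
      congr 1
      funext x
      by_cases hx : x ∈ A N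
      · exact (Set.indicator_of_mem hx _).symm
      · rw [Set.indicator_of_notMem hx]
        exact le_antisymm (not_lt.mp hx) (hF0 N x)
    linarith
  have htend := tendsto_setIntegral_of_monotone hAmeas hAmono
    (hfint.integrableOn : IntegrableOn f (⋃ N, A N) μ)
  have hfin := ge_of_tendsto' htend step
  rwa [hAunion] at hfin

omit [MetricSpace X] [CompactSpace X] [BorelSpace X] in
lemma ind01 (B : Set X) (x : X) :
    0 ≤ B.indicator (fun _ => (1:ℝ)) x ∧ B.indicator (fun _ => (1:ℝ)) x ≤ 1 := by
  by_cases hx : x ∈ B <;> simp [hx]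

omit [MetricSpace X] [CompactSpace X] [BorelSpace X] in
/-- Key step: if every point of a forward-invariant set `E` has some Birkhoff
sum of visits to `B` below `δ n`, then `μ (E ∩ B) ≤ δ`. -/
lemma key (T : X → X) (hT : Measurable T) (μ : Measure X) [IsProbabilityMeasure μ]
    (hinv : μ.map T = μ) (B : Set X) (hB : MeasurableSet B) (E : Set X)
    (hE : MeasurableSet E) (hEinv : ∀ x ∈ E, T x ∈ E) (δ : ℝ) (hδ : 0 < δ)
    (hEδ : ∀ x ∈ E, ∃ n, 1 ≤ n ∧
      (∑ i ∈ Finset.range n, B.indicator (fun _ => (1:ℝ)) (T^[i] x)) < δ * n) :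
    (μ (E ∩ B)).toReal ≤ δ := by
  set g : X → ℝ := fun x => δ - B.indicator (fun _ => (1:ℝ)) x with hg
  set f : X → ℝ := E.indicator g with hf
  have hgmeas : Measurable g :=
    measurable_const.sub (measurable_const.indicator hB)
  have hfmeas : Measurable f := hgmeas.indicator hE
  have hgb : ∀ x, |g x| ≤ δ + 1 := by
    intro x
    obtain ⟨h1, h2⟩ := ind01 B x
    rw [hg, abs_le]; constructor <;> simp only <;> linarith
  have hfb : ∀ x, |f x| ≤ δ + 1 := by
    intro x
    by_cases hx : x ∈ E
    · rw [hf, Set.indicator_of_mem hx]; exact hgb x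
    · rw [hf, Set.indicator_of_notMem hx]; rw [abs_zero]; linarith
  have hEorb : ∀ x ∈ E, ∀ i, T^[i] x ∈ E := by
    intro x hx i
    induction i with
    | zero => exact hx
    | succ i ih => rw [Function.iterate_succ_apply']; exact hEinv _ ih
  have hEsubA : E ⊆ {x | ∃ n, 1 ≤ n ∧ 0 < ∑ i ∈ Finset.range n, f (T^[i] x)} := by
    intro x hx
    obtain ⟨n, hn1, hn2⟩ := hEδ x hx
    refine ⟨n, hn1, ?_⟩
    have heq : ∀ i, f (T^[i] x) = g (T^[i] x) := fun i =>
      Set.indicator_of_mem (hEorb x hx i) g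
    simp only [heq, hg]
    rw [Finset.sum_sub_distrib]
    simp only [Finset.sum_const, Finset.card_range, nsmul_eq_mul, mul_one]
    have : (δ * n : ℝ) = (n : ℝ) * δ := mul_comm _ _
    linarith [hn2]
  have h0 := garsia T hT μ hinv f hfmeas (δ + 1) hfb
  set A := {x | ∃ n, 1 ≤ n ∧ 0 < ∑ i ∈ Finset.range n, f (T^[i] x)} with hA
  have hAmeas : MeasurableSet A := by
    have hrw : A = ⋃ n, ⋃ (_ : 1 ≤ n), {x | 0 < ∑ i ∈ Finset.range n, f (T^[i] x)} := by
      ext x; simp [hA]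
    rw [hrw]
    refine MeasurableSet.iUnion fun n => MeasurableSet.iUnion fun _ => ?_
    exact measurableSet_lt measurable_const
      (Finset.measurable_sum _ (fun i _ => hfmeas.comp (hT.iterate i)))
  have hind_int : IntegrableOn (fun x => B.indicator (fun _ => (1:ℝ)) x) E μ := by
    refine Integrable.integrableOn ?_
    refine ⟨(measurable_const.indicator hB).aestronglyMeasurable,
      HasFiniteIntegral.of_bounded (C := 1) (ae_of_all _ (fun x => ?_))⟩
    obtain ⟨h1, h2⟩ := ind01 B x
    rw [Real.norm_eq_abs, abs_le]; constructor <;> linarith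
  have hcalc : ∫ x in A, f x ∂μ = δ * (μ E).toReal - (μ (E ∩ B)).toReal := by
    rw [← integral_indicator hAmeas]
    have hAE : A.indicator f = E.indicator g := by
      rw [hf, Set.indicator_indicator, Set.inter_eq_self_of_subset_right hEsubA]
    rw [hAE, integral_indicator hE]
    rw [integral_sub (integrableOn_const (C := δ) (measure_ne_top μ E)) hind_int]
    have hBint : ∫ x in E, B.indicator (fun _ => (1:ℝ)) x ∂μ = (μ (E ∩ B)).toReal := by
      rw [← integral_indicator hE, Set.indicator_indicator,
        integral_indicator (hE.inter hB)]
      simp [measureReal_def]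
    rw [hBint, setIntegral_const]
    simp [smul_eq_mul, mul_comm, measureReal_def]
  rw [hcalc] at h0
  have hE1 : (μ E).toReal ≤ 1 := by
    calc (μ E).toReal ≤ (1 : ℝ≥0∞).toReal :=
      ENNReal.toReal_mono (by simp) (prob_le_one (μ := μ) (s := E))
    _ = 1 := by simp
  nlinarith [ENNReal.toReal_nonneg (a := μ (E ∩ B)), hδ.le]

/-- The "bad" set of points whose visit frequency to `B` has liminf zero. -/
def badE (T : X → X) (B : Set X) : Set X :=
  {x | ∀ m : ℕ, ∀ N : ℕ, ∃ n, N ≤ n ∧ 1 ≤ n ∧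
    (∑ i ∈ Finset.range n, B.indicator (fun _ => (1:ℝ)) (T^[i] x)) < 1/((m:ℝ)+1) * n}

omit [MetricSpace X] [CompactSpace X] [BorelSpace X] in
lemma badE_inv (T : X → X) (B : Set X) : ∀ x ∈ badE T B, T x ∈ badE T B := by
  intro x hx m N
  obtain ⟨n', h1, h2, h3⟩ := hx (2*m+1) (N+2)
  have hn2 : 2 ≤ n' := by omega
  obtain ⟨n, rfl⟩ : ∃ n, n' = n + 1 := ⟨n' - 1, by omega⟩
  have hn1 : 1 ≤ n := by omega
  refine ⟨n, by omega, hn1, ?_⟩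
  set g : X → ℝ := B.indicator (fun _ => (1:ℝ)) with hgdef
  have hrel : (∑ i ∈ Finset.range (n+1), g (T^[i] x))
      = (∑ i ∈ Finset.range n, g (T^[i] (T x))) + g x := by
    rw [Finset.sum_range_succ' (fun i => g (T^[i] x)) n]
    simp [Function.iterate_succ_apply]
  have hg0 : 0 ≤ g x := (ind01 B x).1
  have hnn : (1:ℝ) ≤ (n:ℝ) := by exact_mod_cast hn1
  have hcmp : (1/(((2*m+1 : ℕ):ℝ)+1)) * (((n+1 : ℕ)):ℝ) ≤ 1/((m:ℝ)+1) * (n:ℝ) := by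
    have hm1 : (0:ℝ) < (m:ℝ)+1 := by positivity
    rw [div_mul_eq_mul_div, div_mul_eq_mul_div,
      div_le_div_iff₀ (by positivity) (by positivity)]
    push_cast
    nlinarith
  have := h3
  linarith [hrel, hg0, hcmp]

omit [MetricSpace X] [CompactSpace X] [BorelSpace X] in
lemma badE_meas (T : X → X) (hT : Measurable T) (B : Set X) (hB : MeasurableSet B) :
    MeasurableSet (badE T B) := by
  have hrw : badE T B = ⋂ m : ℕ, ⋂ N : ℕ, ⋃ n : ℕ, ⋃ (_ : N ≤ n ∧ 1 ≤ n),
      {x | (∑ i ∈ Finset.range n, B.indicator (fun _ => (1:ℝ)) (T^[i] x))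
        < 1/((m:ℝ)+1) * n} := by
    ext x
    simp only [badE, mem_setOf_eq, mem_iInter, mem_iUnion, exists_prop]
    constructor
    · intro h m N; obtain ⟨n, h1, h2, h3⟩ := h m N; exact ⟨n, ⟨h1, h2⟩, h3⟩
    · intro h m N; obtain ⟨n, ⟨h1, h2⟩, h3⟩ := h m N; exact ⟨n, h1, h2, h3⟩
  rw [hrw]
  refine MeasurableSet.iInter fun m => MeasurableSet.iInter fun N =>
    MeasurableSet.iUnion fun n => MeasurableSet.iUnion fun _ => ?_
  exact measurableSet_lt
    (Finset.measurable_sum _ (fun i _ =>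
      (measurable_const.indicator hB).comp (hT.iterate i))) measurable_const

omit [MetricSpace X] [CompactSpace X] [BorelSpace X] in
lemma badE_null (T : X → X) (hT : Measurable T) (μ : Measure X)
    [IsProbabilityMeasure μ] (hinv : μ.map T = μ) (B : Set X) (hB : MeasurableSet B) :
    μ (badE T B ∩ B) = 0 := by
  have hbound : ∀ m : ℕ, (μ (badE T B ∩ B)).toReal ≤ 1/((m:ℝ)+1) := by
    intro m
    refine key T hT μ hinv B hB (badE T B) (badE_meas T hT B hB) (badE_inv T B)
      (1/((m:ℝ)+1)) (by positivity) ?_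
    intro x hx
    obtain ⟨n, _, h2, h3⟩ := hx m 0
    exact ⟨n, h2, h3⟩
  have h0 : (μ (badE T B ∩ B)).toReal = 0 := by
    by_contra h
    have hpos : 0 < (μ (badE T B ∩ B)).toReal :=
      lt_of_le_of_ne ENNReal.toReal_nonneg (Ne.symm h)
    obtain ⟨m, hm⟩ := exists_nat_one_div_lt hpos
    exact absurd (hbound m) (not_le.mpr hm)
  rcases (ENNReal.toReal_eq_zero_iff _).mp h0 with h | h
  · exact h
  · exact absurd h (measure_ne_top μ _)

end WAPaux

/-- the set `W(T)` of weakly almost periodic points has full measure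
for every invariant Borel probability measure. -/
theorem weaklyAlmostPeriodic_totally_full_measure (T : X → X) (hT : Continuous T)
    (μ : Measure X) (hμ : IsProbabilityMeasure μ) (hinv : μ.map T = μ) :
    μ (weaklyAlmostPeriodicPts T) = 1 := by
  haveI := hμ
  have hTm : Measurable T := hT.measurable
  rcases isEmpty_or_nonempty X with hX | hX
  · exfalso
    have h1 : μ Set.univ = 1 := measure_univ
    have h2 : (Set.univ : Set X) = ∅ := Set.univ_eq_empty_iff.mpr hX
    rw [h2, measure_empty] at h1
    exact zero_ne_one h1
  set u : ℕ → X := TopologicalSpace.denseSeq X with hu_def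
  have hu : DenseRange u := TopologicalSpace.denseRange_denseSeq X
  set c : ℕ → ℝ := fun m => 1/((m:ℝ)+1) with hc_def
  have hc : ∀ m, 0 < c m := fun m => by positivity
  set Bad : Set X := ⋃ p : ℕ × ℕ,
    (WAPaux.badE T (Metric.ball (u p.1) (c p.2)) ∩ Metric.ball (u p.1) (c p.2))
    with hBad_def
  have hBadmeas : MeasurableSet Bad :=
    MeasurableSet.iUnion fun p =>
      (WAPaux.badE_meas T hTm _ measurableSet_ball).inter measurableSet_ball
  have hBadnull : μ Bad = 0 :=
    measure_iUnion_null fun p =>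
      WAPaux.badE_null T hTm μ hinv _ measurableSet_ball
  have hsub : Badᶜ ⊆ weaklyAlmostPeriodicPts T := by
    intro x hx
    simp only [weaklyAlmostPeriodicPts, visitLiminf, Set.mem_setOf_eq]
    intro ε hε
    obtain ⟨m, hm⟩ : ∃ m : ℕ, 2 * c m < ε := by
      obtain ⟨m, hm⟩ := exists_nat_one_div_lt (half_pos hε)
      exact ⟨m, by rw [hc_def]; simp only; linarith⟩
    obtain ⟨k, hk⟩ := hu.exists_dist_lt x (hc m)
    set B : Set X := Metric.ball (u k) (c m) with hBdef
    have hxB : x ∈ B := Metric.mem_ball.mpr hk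
    have hBsub : B ⊆ Metric.ball x ε := by
      intro y hy
      rw [Metric.mem_ball] at hy ⊢
      have h1 : dist y x ≤ dist y (u k) + dist x (u k) := by
        rw [dist_comm x (u k)]; exact dist_triangle y (u k) x
      linarith
    have hxE : x ∉ WAPaux.badE T B := by
      intro hE
      exact hx (Set.mem_iUnion.mpr ⟨(k, m), ⟨hE, hxB⟩⟩)
    simp only [WAPaux.badE, Set.mem_setOf_eq] at hxE
    push_neg at hxE
    obtain ⟨m₀, N₀, hlb⟩ := hxE
    -- abbreviations for the averages
    set aB : ℕ → ℝ := fun n =>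
      (∑ i ∈ Finset.range n, B.indicator (fun _ => (1:ℝ)) (T^[i] x)) / n with haB
    set ab : ℕ → ℝ := fun n =>
      (∑ i ∈ Finset.range n, (Metric.ball x ε).indicator (fun _ => (1:ℝ)) (T^[i] x)) / n
      with hab
    have hle1 : ∀ (E' : Set X) (n : ℕ),
        (∑ i ∈ Finset.range n, E'.indicator (fun _ => (1:ℝ)) (T^[i] x)) / n ≤ 1 := by
      intro E' n
      rcases Nat.eq_zero_or_pos n with h | h
      · subst h; simp
      · rw [div_le_one (by exact_mod_cast h)]
        calc (∑ i ∈ Finset.range n, E'.indicator (fun _ => (1:ℝ)) (T^[i] x))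
            ≤ ∑ _i ∈ Finset.range n, (1:ℝ) :=
              Finset.sum_le_sum fun i _ => (WAPaux.ind01 E' _).2
        _ = n := by simp
    have hge0 : ∀ (E' : Set X) (n : ℕ),
        0 ≤ (∑ i ∈ Finset.range n, E'.indicator (fun _ => (1:ℝ)) (T^[i] x)) / n := by
      intro E' n
      exact div_nonneg (Finset.sum_nonneg fun i _ => (WAPaux.ind01 E' _).1)
        (Nat.cast_nonneg n)
    have hlim1 : 1/((m₀:ℝ)+1) ≤ Filter.atTop.liminf aB := by
      refine Filter.le_liminf_of_le ?_ ?_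
      · exact (Filter.isBoundedUnder_of ⟨1, fun n => hle1 B n⟩).isCoboundedUnder_ge
      · filter_upwards [Filter.eventually_ge_atTop (max N₀ 1)] with n hn
        have h1 : N₀ ≤ n := le_trans (le_max_left _ _) hn
        have h2 : 1 ≤ n := le_trans (le_max_right _ _) hn
        have h3 := hlb n h1 h2
        rw [haB]
        simp only
        rw [le_div_iff₀ (by exact_mod_cast h2)]
        linarith
    have hlim2 : Filter.atTop.liminf aB ≤ Filter.atTop.liminf ab := by
      refine Filter.liminf_le_liminf ?_ ?_ ?_
      · refine Filter.Eventually.of_forall fun n => ?_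
        rw [haB, hab]
        simp only
        rw [div_eq_mul_inv, div_eq_mul_inv]
        refine mul_le_mul_of_nonneg_right ?_ (by positivity)
        exact Finset.sum_le_sum fun i _ =>
          Set.indicator_le_indicator_of_subset hBsub (fun _ => zero_le_one) _
      · exact Filter.isBoundedUnder_of ⟨0, fun n => hge0 B n⟩
      · exact (Filter.isBoundedUnder_of
          ⟨1, fun n => hle1 (Metric.ball x ε) n⟩).isCoboundedUnder_ge
    have : (0:ℝ) < Filter.atTop.liminf ab := by
      calc (0:ℝ) < 1/((m₀:ℝ)+1) := by positivity
      _ ≤ Filter.atTop.liminf aB := hlim1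
      _ ≤ Filter.atTop.liminf ab := hlim2
    exact this
  have h1 : μ Badᶜ = 1 := (prob_compl_eq_one_iff hBadmeas).mpr hBadnull
  refine le_antisymm prob_le_one ?_
  calc (1:ℝ≥0∞) = μ Badᶜ := h1.symm
  _ ≤ μ (weaklyAlmostPeriodicPts T) := measure_mono hsub

end
end

section
/- For any continuous map T of a compact metric space X, the set QW(T) \ W(T) of quasi-weakly almost periodic points that are not weakly almost periodic is contained in the irregular set I(T) = {x : the empirical measures Υ_n(x) do not converge}. -/
open MeasureTheory Filter Set Metric Topology NNReal ENNReal

noncomputable section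

variable {X : Type*} [MetricSpace X] [CompactSpace X] [MeasurableSpace X] [BorelSpace X]

/-- A continuous bump squeezed between the indicators of `ball x r` and `ball x R`. -/
def distBump (x : X) (r R : ℝ) (y : X) : ℝ :=
  max 0 (min 1 ((R - dist y x) / (R - r)))

lemma distBump_continuous (x : X) (r R : ℝ) : Continuous (distBump x r R) := by
  unfold distBump
  exact continuous_const.max (continuous_const.min
    ((continuous_const.sub (continuous_id.dist continuous_const)).div_const _))

lemma distBump_nonneg (x : X) (r R : ℝ) (y : X) : 0 ≤ distBump x r R y := le_max_left _ _

lemma indicator_le_distBump {x : X} {r R : ℝ} (hrR : r < R) (y : X) :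
    (Metric.ball x r).indicator (fun _ => (1 : ℝ)) y ≤ distBump x r R y := by
  by_cases hy : y ∈ Metric.ball x r
  · rw [Set.indicator_of_mem hy]
    have hd : dist y x < r := by rwa [Metric.mem_ball] at hy
    have h1 : (1 : ℝ) ≤ (R - dist y x) / (R - r) := by
      rw [le_div_iff₀ (by linarith)]; linarith
    unfold distBump
    have : min 1 ((R - dist y x) / (R - r)) = 1 := min_eq_left h1
    rw [this]; simp
  · rw [Set.indicator_of_notMem hy]; exact distBump_nonneg x r R y

lemma distBump_le_indicator {x : X} {r R : ℝ} (hrR : r < R) (y : X) :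
    distBump x r R y ≤ (Metric.ball x R).indicator (fun _ => (1 : ℝ)) y := by
  by_cases hy : y ∈ Metric.ball x R
  · rw [Set.indicator_of_mem hy]
    exact max_le zero_le_one (min_le_left _ _)
  · rw [Set.indicator_of_notMem hy]
    have hd : R ≤ dist y x := by
      rw [Metric.mem_ball, not_lt] at hy; exact hy
    have : (R - dist y x) / (R - r) ≤ 0 :=
      div_nonpos_of_nonpos_of_nonneg (by linarith) (by linarith)
    unfold distBump
    exact max_le le_rfl (le_trans (min_le_right _ _) this)

lemma birkhoffAvg_mono (T : X → X) {f g : X → ℝ} (h : ∀ y, f y ≤ g y) (x : X) (n : ℕ) :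
    birkhoffAvg T f x n ≤ birkhoffAvg T g x n := by
  unfold birkhoffAvg
  apply div_le_div_of_nonneg_right ?_ (Nat.cast_nonneg n)
  exact Finset.sum_le_sum fun i _ => h _

lemma birkhoffAvg_nonneg (T : X → X) {f : X → ℝ} (h : ∀ y, 0 ≤ f y) (x : X) (n : ℕ) :
    0 ≤ birkhoffAvg T f x n := by
  unfold birkhoffAvg
  exact div_nonneg (Finset.sum_nonneg fun i _ => h _) (Nat.cast_nonneg n)

/-- quasi-weakly almost periodic points that are not weakly almost
periodic are irregular: `QW(T) \ W(T) ⊆ I(T)`. -/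
theorem qw_minus_w_subset_irregular (T : X → X) (hT : Continuous T) :
    quasiWeaklyAlmostPeriodicPts T \ weaklyAlmostPeriodicPts T ⊆
      (quasiRegularPts T)ᶜ := by
  rintro x ⟨hQW, hW⟩ ⟨μ, hμprob, _hinv, hgen⟩
  apply hW
  intro ε hε
  haveI := hμprob
  -- integrability of continuous functions
  have hint : ∀ f : X → ℝ, Continuous f → Integrable f μ := fun f hf =>
    hf.integrable_of_hasCompactSupport (isClosed_tsupport f).isCompact
  have hind_int : ∀ R : ℝ, Integrable ((Metric.ball x R).indicator fun _ => (1 : ℝ)) μ :=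
    fun R => (integrable_const (1 : ℝ)).indicator measurableSet_ball
  set φ := distBump x (ε / 2) (3 * ε / 4) with hφdef
  set ψ := distBump x (3 * ε / 4) ε with hψdef
  have hφc : Continuous φ := distBump_continuous _ _ _
  have hψc : Continuous ψ := distBump_continuous _ _ _
  have h1 : (ε / 2 : ℝ) < 3 * ε / 4 := by linarith
  have h2 : (3 * ε / 4 : ℝ) < ε := by linarith
  -- freq functions
  set u : ℕ → ℝ := fun n => birkhoffAvg T ((Metric.ball x (ε / 2)).indicator fun _ => 1) x n
  set u' : ℕ → ℝ := fun n => birkhoffAvg T ((Metric.ball x ε).indicator fun _ => 1) x n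
  have hu : visitLimsup T x (Metric.ball x (ε / 2)) = Filter.atTop.limsup u := rfl
  have hu' : visitLiminf T x (Metric.ball x ε) = Filter.atTop.liminf u' := rfl
  -- Step 1: μ (ball x (3ε/4)) has positive mass
  have hgenφ := hgen φ hφc
  have hgenψ := hgen ψ hψc
  have hQWε := hQW (ε / 2) (by linarith)
  have huφ : ∀ n, u n ≤ birkhoffAvg T φ x n :=
    fun n => birkhoffAvg_mono T (indicator_le_distBump h1) x n
  have hulimsup : Filter.atTop.limsup u ≤ ∫ y, φ y ∂μ := by
    rw [← hgenφ.limsup_eq]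
    refine Filter.limsup_le_limsup (Eventually.of_forall huφ) ?_ ?_
    · exact (Filter.isBoundedUnder_of ⟨0, fun n =>
        birkhoffAvg_nonneg T (fun y => Set.indicator_nonneg (fun _ _ => zero_le_one) y) x n⟩
        : Filter.IsBoundedUnder (· ≥ ·) atTop u).isCoboundedUnder_le
    · exact hgenφ.isBoundedUnder_le
  have hφle : (∫ y, φ y ∂μ) ≤ (μ (Metric.ball x (3 * ε / 4))).toReal := by
    calc (∫ y, φ y ∂μ) ≤ ∫ y, (Metric.ball x (3 * ε / 4)).indicator (fun _ => (1:ℝ)) y ∂μ :=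
          integral_mono (hint φ hφc) (hind_int _) (distBump_le_indicator h1)
      _ = (μ (Metric.ball x (3 * ε / 4))).toReal := by
          rw [integral_indicator_const (1 : ℝ) measurableSet_ball, smul_eq_mul, mul_one]; rfl
  have hpos : 0 < (μ (Metric.ball x (3 * ε / 4))).toReal := by
    rw [hu] at hQWε
    calc (0:ℝ) < Filter.atTop.limsup u := hQWε
      _ ≤ ∫ y, φ y ∂μ := hulimsup
      _ ≤ _ := hφle
  -- Step 2: lower bound on liminf of visits to ball x ε
  have hψge : (μ (Metric.ball x (3 * ε / 4))).toReal ≤ ∫ y, ψ y ∂μ := by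
    calc (μ (Metric.ball x (3 * ε / 4))).toReal
        = ∫ y, (Metric.ball x (3 * ε / 4)).indicator (fun _ => (1:ℝ)) y ∂μ := by
          rw [integral_indicator_const (1 : ℝ) measurableSet_ball, smul_eq_mul, mul_one]; rfl
      _ ≤ ∫ y, ψ y ∂μ :=
          integral_mono (hind_int _) (hint ψ hψc) (indicator_le_distBump h2)
  have hψu' : ∀ n, birkhoffAvg T ψ x n ≤ u' n :=
    fun n => birkhoffAvg_mono T (distBump_le_indicator h2) x n
  have hliminf : (∫ y, ψ y ∂μ) ≤ Filter.atTop.liminf u' := by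
    rw [← hgenψ.liminf_eq]
    refine Filter.liminf_le_liminf (Eventually.of_forall hψu') ?_ ?_
    · exact hgenψ.isBoundedUnder_ge
    · refine (Filter.isBoundedUnder_of ⟨1, fun n => ?_⟩
        : Filter.IsBoundedUnder (· ≤ ·) atTop u').isCoboundedUnder_ge
      show u' n ≤ 1
      unfold u'
      unfold birkhoffAvg
      rcases Nat.eq_zero_or_pos n with h0 | h0
      · simp [h0]
      · rw [div_le_one (by exact_mod_cast h0)]
        calc (∑ i ∈ Finset.range n, (Metric.ball x ε).indicator (fun _ => (1:ℝ)) (T^[i] x))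
            ≤ ∑ i ∈ Finset.range n, 1 := Finset.sum_le_sum fun i _ =>
              Set.indicator_le' (fun _ _ => le_rfl) (fun _ _ => zero_le_one) _
          _ = n := by simp
  rw [hu']
  calc (0:ℝ) < (μ (Metric.ball x (3 * ε / 4))).toReal := hpos
    _ ≤ ∫ y, ψ y ∂μ := hψge
    _ ≤ Filter.atTop.liminf u' := hliminf
end
end

section
/- Let T be a continuous map of an infinite compact metric space X such that the periodic points are dense in X and the periodic measures are dense in the space of invariant measures. Then every nonempty open set U ⊆ X contains infinitely many periodic points. -/
open MeasureTheory Filter Set Metric Topology NNReal ENNReal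

noncomputable section

variable {X : Type*} [MetricSpace X] [CompactSpace X] [MeasurableSpace X] [BorelSpace X]

-- helper lemmas to insert
section PomHelpers

private lemma rotate_sum {α M : Type*} [AddCommMonoid M] {T : α → α} {x : α} {n : ℕ}
    (hn : 1 ≤ n) (hx : T^[n] x = x) (f : α → M) :
    ∑ i ∈ Finset.range n, f (T^[i+1] x) = ∑ i ∈ Finset.range n, f (T^[i] x) := by
  have hper : Function.IsPeriodicPt T n x := hx
  refine Finset.sum_nbij' (fun i => (i+1) % n) (fun j => (j + (n-1)) % n) ?_ ?_ ?_ ?_ ?_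
  · intro a _; exact Finset.mem_range.mpr (Nat.mod_lt _ (by omega))
  · intro a _; exact Finset.mem_range.mpr (Nat.mod_lt _ (by omega))
  · intro a ha
    show ((a + 1) % n + (n - 1)) % n = a
    rw [Nat.mod_add_mod]
    have h : a + 1 + (n - 1) = a + n := by omega
    rw [h, Nat.add_mod_right, Nat.mod_eq_of_lt (Finset.mem_range.mp ha)]
  · intro a ha
    show ((a + (n - 1)) % n + 1) % n = a
    rw [Nat.mod_add_mod]
    have h : a + (n - 1) + 1 = a + n := by omega
    rw [h, Nat.add_mod_right, Nat.mod_eq_of_lt (Finset.mem_range.mp ha)]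
  · intro a _
    rw [hper.iterate_mod_apply (a+1)]

private lemma map_finset_sum_meas {α β : Type*} [MeasurableSpace α] [MeasurableSpace β]
    {ι : Type*} (s : Finset ι) (μ : ι → MeasureTheory.Measure α) {f : α → β}
    (hf : Measurable f) :
    (∑ i ∈ s, μ i).map f = ∑ i ∈ s, (μ i).map f := by
  classical
  induction s using Finset.induction_on with
  | empty => simp
  | @insert _ _ h ih =>
      rw [Finset.sum_insert h, Finset.sum_insert h, MeasureTheory.Measure.map_add _ _ hf, ih]

variable {X : Type*} [MetricSpace X] [CompactSpace X] [MeasurableSpace X] [BorelSpace X]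

private lemma pom_prob {T : X → X} {x : X} {n : ℕ} (hn : 1 ≤ n) :
    IsProbabilityMeasure (periodicOrbitMeasure T x n) := by
  constructor
  have hne : (n : ℝ≥0∞) ≠ 0 := Nat.cast_ne_zero.mpr (by omega)
  simp [periodicOrbitMeasure, Measure.smul_apply, Measure.finset_sum_apply,
    ENNReal.inv_mul_cancel hne (by simp : (n : ℝ≥0∞) ≠ ⊤)]

private lemma pom_map {T : X → X} (hT : Continuous T) {x : X} {n : ℕ}
    (hn : 1 ≤ n) (hx : T^[n] x = x) :
    (periodicOrbitMeasure T x n).map T = periodicOrbitMeasure T x n := by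
  rw [periodicOrbitMeasure, Measure.map_smul, map_finset_sum_meas _ _ hT.measurable]
  congr 1
  have : ∀ i, (Measure.dirac (T^[i] x)).map T = Measure.dirac (T^[i+1] x) := by
    intro i
    rw [Measure.map_dirac' hT.measurable, ← Function.iterate_succ_apply' T i x]
  simp_rw [this]
  exact rotate_sum hn hx Measure.dirac

private lemma pom_integral {T : X → X} {x : X} {n : ℕ} (φ : X → ℝ) (hφ : Continuous φ) :
    ∫ y, φ y ∂(periodicOrbitMeasure T x n)
      = (∑ i ∈ Finset.range n, φ (T^[i] x)) / n := by
  have hint : ∀ i ∈ Finset.range n, Integrable φ (Measure.dirac (T^[i] x)) :=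
    fun i _ => hφ.integrable_of_hasCompactSupport (HasCompactSupport.of_compactSpace φ)
  rw [periodicOrbitMeasure, integral_smul_measure, integral_finset_sum_measure hint]
  simp [integral_dirac, ENNReal.toReal_inv, div_eq_inv_mul]

end PomHelpers

/-- if `X` is infinite, the periodic points are dense and the periodic
measures are weak*-dense in the invariant measures, then every nonempty open set
contains infinitely many periodic points. -/
theorem infinite_periodicPts_in_open (T : X → X) (hT : Continuous T) [Infinite X]
    (hper : Dense (Function.periodicPts T))
    (hdense : ∀ μ : Measure X, IsProbabilityMeasure μ → μ.map T = μ →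
      ∃ (x : ℕ → X) (n : ℕ → ℕ), (∀ k, 1 ≤ n k ∧ T^[n k] (x k) = x k) ∧
        ∀ φ : X → ℝ, Continuous φ →
          Tendsto (fun k => ∫ y, φ y ∂(periodicOrbitMeasure T (x k) (n k))) atTop
            (𝓝 (∫ y, φ y ∂μ))) :
    ∀ U : Set X, IsOpen U → U.Nonempty →
      (U ∩ Function.periodicPts T).Infinite := by
  intro U hU hUne
  by_contra hfin'
  rw [Set.not_infinite] at hfin'
  set S : Set X := U ∩ Function.periodicPts T with hS
  set Δ : Set X := ⋃ p ∈ S, Set.range fun i => T^[i] p with hΔ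
  have hΔfin : Δ.Finite := by
    refine Set.Finite.biUnion hfin' fun p hp => ?_
    obtain ⟨m, hm, hmp⟩ := hp.2
    have hsub : (Set.range fun i => T^[i] p) ⊆ (fun i => T^[i] p) '' Set.Iio m := by
      rintro _ ⟨i, rfl⟩
      exact ⟨i % m, Nat.mod_lt _ hm, hmp.iterate_mod_apply i⟩
    exact ((Set.finite_Iio _).image _).subset hsub
  have hΔclosed : IsClosed Δ := hΔfin.isClosed
  have hΔinv : ∀ p ∈ S, ∀ i, T^[i] p ∈ Δ := fun p hp i =>
    Set.mem_biUnion hp ⟨i, rfl⟩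
  have hclose : ∀ z, z ∈ Function.periodicPts T → ∀ i, T^[i] z ∈ Δ → z ∈ Δ := by
    intro z hz i hi
    obtain ⟨m, hm, hmz⟩ := hz
    rw [hΔ, Set.mem_iUnion₂] at hi
    obtain ⟨p, hp, j, hj⟩ := hi
    have hj' : T^[j] p = T^[i] z := hj
    have h1 : T^[m * i] z = z := hmz.mul_const i
    have h2 : i ≤ m * i := Nat.le_mul_of_pos_left i hm
    have key : T^[m * i - i + j] p = z := by
      calc T^[m * i - i + j] p = T^[m * i - i] (T^[j] p) := Function.iterate_add_apply _ _ _ _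
        _ = T^[m * i - i] (T^[i] z) := by rw [hj']
        _ = T^[m * i - i + i] z := (Function.iterate_add_apply _ _ _ _).symm
        _ = z := by rw [Nat.sub_add_cancel h2, h1]
    exact key ▸ hΔinv p hp (m * i - i + j)
  -- pick p₀ ∈ U periodic
  obtain ⟨p₀, hp₀per, hp₀U⟩ := hper.exists_mem_open hU hUne
  have hp₀S : p₀ ∈ S := ⟨hp₀U, hp₀per⟩
  obtain ⟨m₁, hm₁, hm₁p⟩ := id hp₀per
  -- pick z outside Δ periodic
  have hco : Δᶜ.Nonempty := hΔfin.infinite_compl.nonempty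
  obtain ⟨z, hzper, hzΔ⟩ := hper.exists_mem_open hΔclosed.isOpen_compl hco
  obtain ⟨m₂, hm₂, hm₂z⟩ := id hzper
  have hzorb : ∀ i, T^[i] z ∉ Δ := fun i hi => hzΔ (hclose z hzper i hi)
  -- the orbit of z
  set Orbz : Set X := Set.range fun i => T^[i] z with hOrbz
  have hOrbzfin : Orbz.Finite := by
    have hsub : Orbz ⊆ (fun i => T^[i] z) '' Set.Iio m₂ := by
      rintro _ ⟨i, rfl⟩
      exact ⟨i % m₂, Nat.mod_lt _ hm₂, hm₂z.iterate_mod_apply i⟩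
    exact ((Set.finite_Iio _).image _).subset hsub
  have hdisj : Disjoint Δ Orbz := Set.disjoint_left.mpr (by
    rintro a haΔ ⟨i, rfl⟩
    exact hzorb i haΔ)
  -- Urysohn function ψ : 0 on Δ, 1 on Orbz
  obtain ⟨ψ, hψ0, hψ1, hψ01⟩ :=
    exists_continuous_zero_one_of_isClosed hΔclosed hOrbzfin.isClosed hdisj
  -- bump function φ at p₀ supported in U
  obtain ⟨ε, hε, hball⟩ := Metric.isOpen_iff.mp hU p₀ hp₀U
  set φ : X → ℝ := fun y => max (1 - dist y p₀ / ε) 0 with hφdef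
  have hφc : Continuous φ :=
    (continuous_const.sub ((continuous_id.dist continuous_const).div_const ε)).max
      continuous_const
  have hφ0 : ∀ y, 0 ≤ φ y := fun y => le_max_right _ _
  have hφp₀ : φ p₀ = 1 := by simp [hφdef]
  have hφU : ∀ y, φ y ≠ 0 → y ∈ U := by
    intro y hy
    apply hball
    rw [Metric.mem_ball]
    by_contra hge
    push_neg at hge
    apply hy
    have h1 : (1 : ℝ) ≤ dist y p₀ / ε := (one_le_div hε).mpr hge
    simp only [hφdef]
    rw [max_eq_right (by linarith)]
  -- the measures
  set ν₁ := periodicOrbitMeasure T p₀ m₁ with hν₁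
  set ν₂ := periodicOrbitMeasure T z m₂ with hν₂
  haveI hprob₁ : IsProbabilityMeasure ν₁ := pom_prob hm₁
  haveI hprob₂ : IsProbabilityMeasure ν₂ := pom_prob hm₂
  set ω : Measure X := (2 : ℝ≥0∞)⁻¹ • ν₁ + (2 : ℝ≥0∞)⁻¹ • ν₂ with hω
  haveI hfin₁ : IsFiniteMeasure ((2 : ℝ≥0∞)⁻¹ • ν₁) := by
    constructor
    rw [Measure.smul_apply, measure_univ, smul_eq_mul, mul_one]
    exact lt_of_le_of_lt (ENNReal.inv_le_one.mpr one_le_two) ENNReal.one_lt_top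
  haveI hfin₂ : IsFiniteMeasure ((2 : ℝ≥0∞)⁻¹ • ν₂) := by
    constructor
    rw [Measure.smul_apply, measure_univ, smul_eq_mul, mul_one]
    exact lt_of_le_of_lt (ENNReal.inv_le_one.mpr one_le_two) ENNReal.one_lt_top
  have hωprob : IsProbabilityMeasure ω := by
    constructor
    simp [hω, Measure.add_apply, measure_univ, ENNReal.inv_two_add_inv_two]
  have hωinv : ω.map T = ω := by
    rw [hω, Measure.map_add _ _ hT.measurable, Measure.map_smul, Measure.map_smul,
      hν₁, hν₂, pom_map hT hm₁ hm₁p, pom_map hT hm₂ hm₂z]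
  -- integral formula over ω
  have hωint : ∀ f : X → ℝ, Continuous f →
      ∫ y, f y ∂ω = (2 : ℝ)⁻¹ * (∫ y, f y ∂ν₁) + (2 : ℝ)⁻¹ * (∫ y, f y ∂ν₂) := by
    intro f hf
    have hint1 : Integrable f ((2 : ℝ≥0∞)⁻¹ • ν₁) :=
      hf.integrable_of_hasCompactSupport (HasCompactSupport.of_compactSpace f)
    have hint2 : Integrable f ((2 : ℝ≥0∞)⁻¹ • ν₂) :=
      hf.integrable_of_hasCompactSupport (HasCompactSupport.of_compactSpace f)
    rw [hω, integral_add_measure hint1 hint2, integral_smul_measure, integral_smul_measure]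
    norm_num
  -- apply the density hypothesis
  obtain ⟨xs, ns, hxs, hconv⟩ := hdense ω hωprob hωinv
  -- ∫ φ dω > 0
  have hφν₁ : (m₁ : ℝ)⁻¹ ≤ ∫ y, φ y ∂ν₁ := by
    rw [hν₁, pom_integral φ hφc]
    have h0mem : 0 ∈ Finset.range m₁ := Finset.mem_range.mpr hm₁
    have hle : φ p₀ ≤ ∑ i ∈ Finset.range m₁, φ (T^[i] p₀) := by
      have := Finset.single_le_sum (f := fun i => φ (T^[i] p₀))
        (fun i _ => hφ0 _) h0mem
      simpa using this
    rw [hφp₀] at hle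
    rw [inv_eq_one_div, div_le_div_iff_of_pos_right (by exact_mod_cast hm₁)]
    exact hle
  have hφω : 0 < ∫ y, φ y ∂ω := by
    rw [hωint φ hφc]
    have h2 : (0 : ℝ) ≤ ∫ y, φ y ∂ν₂ := integral_nonneg hφ0
    have hm₁pos : (0 : ℝ) < (m₁ : ℝ)⁻¹ := by positivity
    nlinarith
  -- eventually the approximating orbits meet U, hence lie in Δ
  have hev : ∀ᶠ k in atTop,
      0 < ∫ y, φ y ∂periodicOrbitMeasure T (xs k) (ns k) :=
    (hconv φ hφc).eventually (eventually_gt_nhds hφω)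
  have hev0 : ∀ᶠ k in atTop,
      ∫ y, (ψ : X → ℝ) y ∂periodicOrbitMeasure T (xs k) (ns k) = 0 := by
    filter_upwards [hev] with k hk
    obtain ⟨hnk, hxk⟩ := hxs k
    rw [pom_integral φ hφc] at hk
    have hsumpos : 0 < ∑ i ∈ Finset.range (ns k), φ (T^[i] (xs k)) := by
      by_contra hle
      push_neg at hle
      have hnn : (0 : ℝ) ≤ (ns k : ℝ) := Nat.cast_nonneg _
      have : (∑ i ∈ Finset.range (ns k), φ (T^[i] (xs k))) / (ns k) ≤ 0 :=
        div_nonpos_of_nonpos_of_nonneg hle hnn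
      linarith
    obtain ⟨i, hi, hine⟩ := Finset.exists_ne_zero_of_sum_ne_zero hsumpos.ne'
    have hqU : T^[i] (xs k) ∈ U := hφU _ hine
    -- T^[i] (xs k) is periodic
    have hqper : T^[ns k] (T^[i] (xs k)) = T^[i] (xs k) := by
      rw [← Function.iterate_add_apply, Nat.add_comm, Function.iterate_add_apply, hxk]
    have hqS : T^[i] (xs k) ∈ S := ⟨hqU, ⟨ns k, hnk, hqper⟩⟩
    -- the whole orbit of xs k lies in Δ
    have horb : ∀ j, T^[j] (xs k) ∈ Δ := by
      intro j
      have hxper : Function.IsPeriodicPt T (ns k) (xs k) := hxk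
      have h1 : T^[ns k * i] (xs k) = xs k := hxper.mul_const i
      have h2 : i ≤ ns k * i := Nat.le_mul_of_pos_left i hnk
      have key : T^[j + ns k * i - i] (T^[i] (xs k)) = T^[j] (xs k) := by
        rw [← Function.iterate_add_apply]
        have : j + ns k * i - i + i = j + ns k * i := by omega
        rw [this, Function.iterate_add_apply, h1]
      exact key ▸ hΔinv _ hqS (j + ns k * i - i)
    rw [pom_integral _ ψ.continuous, Finset.sum_eq_zero, zero_div]
    intro j _
    exact hψ0 (horb j)
  -- contradiction via ψ
  have hψν₂ : ∫ y, (ψ : X → ℝ) y ∂ν₂ = 1 := by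
    rw [hν₂, pom_integral _ ψ.continuous]
    have h1 : ∀ i ∈ Finset.range m₂, (ψ : X → ℝ) (T^[i] z) = 1 := fun i _ => hψ1 ⟨i, rfl⟩
    rw [Finset.sum_congr rfl h1, Finset.sum_const, Finset.card_range, nsmul_eq_mul, mul_one]
    exact div_self (by exact_mod_cast hm₂.ne')
  have hψω : (2 : ℝ)⁻¹ ≤ ∫ y, (ψ : X → ℝ) y ∂ω := by
    rw [hωint _ ψ.continuous, hψν₂, mul_one]
    have h1 : (0 : ℝ) ≤ ∫ y, (ψ : X → ℝ) y ∂ν₁ :=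
      integral_nonneg fun y => (hψ01 y).1
    nlinarith
  have hzero : ∫ y, (ψ : X → ℝ) y ∂ω = 0 :=
    tendsto_nhds_unique (hconv _ ψ.continuous)
      (tendsto_const_nhds.congr' (hev0.mono fun k hk => hk.symm))
  rw [hzero] at hψω
  norm_num at hψω
end
end
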